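/- Let A = A^0 ⊕ ⋯ ⊕ A^n be a finite-dimensional commutative graded ℝ-algebra with a degree isomorphism deg_A : A^n → ℝ such that the pairing A^i × A^{n-i} → ℝ, (x,y) ↦ deg_A(xy) is nondegenerate for all i (Poincaré duality). For r ≥ 1 and classes c_i ∈ A^i (1 ≤ i ≤ r), set B = A[ζ]/(ζ^r + c_1 ζ^{r-1} + ⋯ + c_r), graded with ζ in degree 1, with degree map deg_B : B^{n+r-1} → ℝ determined by deg_B(ζ^{r-1} x) = deg_A(x) for x ∈ A^n. Then B satisfies Poincaré duality: for all k, the pairing B^k × B^{n+r-1-k} → ℝ, (x,y) ↦ deg_B(xy), is nondegenerate. -/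
import Mathlib


open Polynomial

/-- The polynomial `ζ^r + c_1 ζ^{r-1} + ⋯ + c_r` defining the projective bundle ring. -/
noncomputable def pbPoly {A : Type*} [CommRing A] (r : ℕ) (c : ℕ → A) : A[X] :=
  X ^ r + ∑ i ∈ Finset.Icc 1 r, C (c i) * X ^ (r - i)

/-- The degree-`k` graded piece of `B = A[ζ]/(ζ^r + c_1 ζ^{r-1} + ⋯ + c_r)`,
spanned by the elements `ζ^i · a` with `i < r`, `i ≤ k`, `a ∈ A^{k-i}`. -/
noncomputable def pbGrade {A : Type*} [CommRing A] [Algebra ℝ A] (𝒜 : ℕ → Submodule ℝ A)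
    (r : ℕ) (c : ℕ → A) (k : ℕ) : Submodule ℝ (AdjoinRoot (pbPoly r c)) :=
  Submodule.span ℝ {b | ∃ i a, i < r ∧ i ≤ k ∧ a ∈ 𝒜 (k - i) ∧
    b = AdjoinRoot.root (pbPoly r c) ^ i * algebraMap A _ a}

/-- If `A` is a finite-dimensional graded commutative `ℝ`-algebra with top
degree `n` satisfying Poincaré duality with respect to `deg_A`, then the projective bundle ring
`B = A[ζ]/(ζ^r + c_1 ζ^{r-1} + ⋯ + c_r)` satisfies Poincaré duality with respect to the degree
map `deg_B` determined by `deg_B(ζ^{r-1} x) = deg_A x` for `x ∈ A^n`. -/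
lemma pb_rep {A : Type*} [CommRing A] [Algebra ℝ A] (𝒜 : ℕ → Submodule ℝ A)
    (r : ℕ) (c : ℕ → A) (k : ℕ) (x : AdjoinRoot (pbPoly r c))
    (hx : x ∈ pbGrade 𝒜 r c k) :
    ∃ a : ℕ → A, (∀ j, a j ∈ 𝒜 (k - j)) ∧ (∀ j, k < j → a j = 0) ∧ (∀ j, r ≤ j → a j = 0) ∧
      x = ∑ j ∈ Finset.range r,
        AdjoinRoot.root (pbPoly r c) ^ j * algebraMap A (AdjoinRoot (pbPoly r c)) (a j) := by
  induction hx using Submodule.span_induction with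
  | mem b hb =>
    obtain ⟨i, a, hir, hik, ha, rfl⟩ := hb
    refine ⟨fun j => if j = i then a else 0, ?_, ?_, ?_, ?_⟩
    · intro j; by_cases h : j = i <;> simp [h, ha, Submodule.zero_mem]
    · intro j hj; have : j ≠ i := by omega
      simp [this]
    · intro j hj; have : j ≠ i := by omega
      simp [this]
    · rw [Finset.sum_eq_single_of_mem i (Finset.mem_range.2 hir)]
      · simp
      · intro m hm hne; simp [hne]
  | zero => exact ⟨0, by simp, by simp, by simp, by simp⟩
  | add u v hu hv ihu ihv =>
    obtain ⟨a, ha1, ha2, ha3, rfl⟩ := ihu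
    obtain ⟨b, hb1, hb2, hb3, rfl⟩ := ihv
    refine ⟨a + b, fun j => Submodule.add_mem _ (ha1 j) (hb1 j),
      fun j hj => by simp [ha2 j hj, hb2 j hj],
      fun j hj => by simp [ha3 j hj, hb3 j hj], ?_⟩
    rw [← Finset.sum_add_distrib]
    refine Finset.sum_congr rfl fun j _ => ?_
    simp [map_add, mul_add]
  | smul t u hu ihu =>
    obtain ⟨a, ha1, ha2, ha3, rfl⟩ := ihu
    refine ⟨t • a, fun j => Submodule.smul_mem _ t (ha1 j),
      fun j hj => by simp [ha2 j hj], fun j hj => by simp [ha3 j hj], ?_⟩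
    rw [Finset.smul_sum]
    refine Finset.sum_congr rfl fun j _ => ?_
    rw [Pi.smul_apply, Algebra.smul_def, Algebra.smul_def,
      IsScalarTower.algebraMap_apply ℝ A (AdjoinRoot (pbPoly r c)), map_mul]
    ring

theorem stmt0 {A : Type*} [CommRing A] [Algebra ℝ A] [FiniteDimensional ℝ A]
    (𝒜 : ℕ → Submodule ℝ A) [GradedAlgebra 𝒜]
    (n : ℕ) (htop : ∀ j, n < j → 𝒜 j = ⊥)
    (degA : A →ₗ[ℝ] ℝ) (hdegA : Function.Bijective (degA.comp (𝒜 n).subtype))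
    (hPD : ∀ i, ∀ x ∈ 𝒜 i, (∀ y ∈ 𝒜 (n - i), degA (x * y) = 0) → x = 0)
    (r : ℕ) (hr : 1 ≤ r)
    (c : ℕ → A) (hc : ∀ i, 1 ≤ i → i ≤ r → c i ∈ 𝒜 i)
    (degB : AdjoinRoot (pbPoly r c) →ₗ[ℝ] ℝ)
    (hdegB : ∀ x ∈ 𝒜 n,
      degB (AdjoinRoot.root (pbPoly r c) ^ (r - 1) * algebraMap A _ x) = degA x) :
    ∀ k ≤ n + r - 1, ∀ x ∈ pbGrade 𝒜 r c k,
      (∀ y ∈ pbGrade 𝒜 r c (n + r - 1 - k), degB (x * y) = 0) → x = 0 := by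
  intro k hk x hx hy
  obtain ⟨a, hmem, hgtk, hger, rfl⟩ := pb_rep 𝒜 r c k x hx
  set ζ := AdjoinRoot.root (pbPoly r c) with hζ
  set φ := algebraMap A (AdjoinRoot (pbPoly r c)) with hφ
  suffices h : ∀ j, a j = 0 by
    refine Finset.sum_eq_zero fun j _ => ?_
    simp [h j]
  have key : ∀ d j, r ≤ j + d → a j = 0 := by
    intro d
    induction d with
    | zero => intro j hj; exact hger j (by omega)
    | succ d ih =>
      intro j hj
      by_cases hjd : r ≤ j + d
      · exact ih j hjd
      have hjr : j < r := by omega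
      have hgt' : ∀ m, j < m → a m = 0 := fun m h' => ih m (by omega)
      by_cases hjk : k < j
      · exact hgtk j hjk
      push_neg at hjk
      by_cases hkn : n < k - j
      · have h0 : a j ∈ (⊥ : Submodule ℝ A) := htop (k - j) hkn ▸ hmem j
        exact (Submodule.mem_bot ℝ).1 h0
      push_neg at hkn
      apply hPD (k - j) (a j) (hmem j)
      intro y' hy'
      have hymem : ζ ^ (r - 1 - j) * φ y' ∈ pbGrade 𝒜 r c (n + r - 1 - k) := by
        apply Submodule.subset_span
        refine ⟨r - 1 - j, y', by omega, by omega, ?_, rfl⟩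
        rwa [show n + r - 1 - k - (r - 1 - j) = n - (k - j) by omega]
      have hprod : (∑ m ∈ Finset.range r, ζ ^ m * φ (a m)) * (ζ ^ (r - 1 - j) * φ y') =
          ζ ^ (r - 1) * φ (a j * y') := by
        rw [Finset.sum_mul, Finset.sum_eq_single_of_mem j (Finset.mem_range.2 hjr)]
        · have hp : ζ ^ j * ζ ^ (r - 1 - j) = ζ ^ (r - 1) := by
            rw [← pow_add]; congr 1; omega
          rw [map_mul, ← hp]; ring
        · intro m hm hne
          have hz : a m * y' = 0 := by
            rcases Ne.lt_or_gt hne with hlt | hgtm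
            · by_cases hmk : k < m
              · simp [hgtk m hmk]
              · have h1 : a m * y' ∈ 𝒜 ((k - m) + (n - (k - j))) :=
                  SetLike.mul_mem_graded (hmem m) hy'
                rw [htop _ (by omega)] at h1
                simpa using h1
            · simp [hgt' m hgtm]
          have hq : ζ ^ m * φ (a m) * (ζ ^ (r - 1 - j) * φ y') =
              ζ ^ m * ζ ^ (r - 1 - j) * φ (a m * y') := by rw [map_mul]; ring
          rw [hq, hz, map_zero, mul_zero]
      have h2 := hy _ hymem
      rw [hprod] at h2
      have h3 : a j * y' ∈ 𝒜 n := by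
        have := SetLike.mul_mem_graded (hmem j) hy'
        rwa [show (k - j) + (n - (k - j)) = n by omega] at this
      rwa [hdegB _ h3] at h2
  exact fun j => key r j (by omega)
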